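/- Let a be an integer, α a real number with 0 < α < 1, and f : ℤ → ℝ such that for every r with 0 < r < R the series ∑_{k=1}^∞ r^{k-1} |f(k+a)| converges, for some R > 0. Then for every complex s with |1−s| < min(R, 1), the series ∑_{k=1}^∞ (1−s)^{k-1} ({}_a∇^{-α} f)(k+a) converges and equals s^{-α} · ∑_{k=1}^∞ (1−s)^{k-1} f(k+a), where s^{-α} is the principal complex power (well defined since |1−s| < 1 forces Re s > 0). (The nabla Laplace transform of the α-th fractional sum is s^{-α} F(s).) -/

import Mathlib

/-- The `α`-th nabla fractional sum of `f : ℤ → ℝ` with initial instant `a`: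
`{}_a∇_k^{-α} f(k) = ∑_{i=0}^{k-a-1} (Γ(α+i)/(Γ(α) Γ(i+1))) f(k−i)`. -/
noncomputable def nablaFracSum (a : ℤ) (α : ℝ) (f : ℤ → ℝ) (k : ℤ) : ℝ :=
  ∑ i ∈ Finset.range (k - a).toNat,
    Real.Gamma (α + i) / (Real.Gamma α * Real.Gamma (i + 1)) * f (k - i)



noncomputable def cNab (α : ℝ) (i : ℕ) : ℝ :=
  Real.Gamma (α + i) / (Real.Gamma α * Real.Gamma (i + 1))

lemma cNab_zero {α : ℝ} (hα : 0 < α) : cNab α 0 = 1 := by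
  simp [cNab, Real.Gamma_one, (Real.Gamma_pos_of_pos hα).ne']

lemma cNab_succ {α : ℝ} (hα : 0 < α) (i : ℕ) :
    cNab α (i + 1) = cNab α i * ((α + i) / (i + 1)) := by
  have h1 : α + ((i : ℝ) + 1) = (α + i) + 1 := by ring
  have h2 : ((i : ℝ) + 1) + 1 = ((i : ℝ) + 1) + 1 := rfl
  have hg1 : Real.Gamma ((α + i) + 1) = (α + i) * Real.Gamma (α + i) :=
    Real.Gamma_add_one (by positivity)
  have hg2 : Real.Gamma (((i : ℝ) + 1) + 1) = ((i : ℝ) + 1) * Real.Gamma ((i : ℝ) + 1) :=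
    Real.Gamma_add_one (by positivity)
  have hΓα : Real.Gamma α ≠ 0 := (Real.Gamma_pos_of_pos hα).ne'
  have hΓi : Real.Gamma ((i : ℝ) + 1) ≠ 0 := (Real.Gamma_pos_of_pos (by positivity)).ne'
  simp only [cNab]
  push_cast
  rw [h1, hg1, hg2]
  field_simp

lemma cNab_pos {α : ℝ} (hα : 0 < α) (i : ℕ) : 0 < cNab α i := by
  induction i with
  | zero => simp [cNab_zero hα]
  | succ n ih =>
      rw [cNab_succ hα]
      positivity

lemma cNab_le_one {α : ℝ} (hα : 0 < α) (hα1 : α < 1) (i : ℕ) : cNab α i ≤ 1 := by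
  induction i with
  | zero => simp [cNab_zero hα]
  | succ n ih =>
      rw [cNab_succ hα]
      have h1 : (α + n) / (n + 1 : ℝ) ≤ 1 := by
        rw [div_le_one (by positivity)]; linarith
      have := cNab_pos hα n
      nlinarith

lemma summable_cNab_mul_pow {α : ℝ} (hα : 0 < α) (hα1 : α < 1) {w : ℂ}
    (hw : ‖w‖ < 1) : Summable fun i : ℕ => (cNab α i : ℂ) * w ^ i := by
  apply Summable.of_norm_bounded
    (summable_geometric_of_lt_one (norm_nonneg w) hw)
  intro i
  rw [norm_mul, norm_pow, Complex.norm_real]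
  have h1 : |cNab α i| = cNab α i := abs_of_pos (cNab_pos hα i)
  rw [Real.norm_eq_abs, h1]
  calc cNab α i * ‖w‖ ^ i ≤ 1 * ‖w‖ ^ i := by
        apply mul_le_mul_of_nonneg_right (cNab_le_one hα hα1 i) (by positivity)
    _ = ‖w‖ ^ i := one_mul _

lemma summable_cNab_deriv {α : ℝ} (hα : 0 < α) (hα1 : α < 1) {ρ : ℝ}
    (hρ : ρ < 1) (hρ2 : 1/2 ≤ ρ) {z : ℂ} (hz : ‖z‖ ≤ ρ) :
    Summable fun i : ℕ => (cNab α i : ℂ) * ((i : ℂ) * z ^ (i - 1)) := by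
  have hρ0 : 0 < ρ := by linarith
  have hu : Summable fun n : ℕ => 2 * ((n : ℝ) * ρ ^ n) := by
    have := (summable_pow_mul_geometric_of_norm_lt_one 1 (r := ρ)
      (by rw [Real.norm_eq_abs, abs_of_pos hρ0]; exact hρ)).mul_left 2
    simpa using this
  apply Summable.of_norm_bounded hu
  intro i
  rw [norm_mul, norm_mul, norm_pow, Complex.norm_real,
    Real.norm_eq_abs, abs_of_pos (cNab_pos hα i), Complex.norm_natCast]
  match i with
  | 0 => simp
  | (m + 1) =>
      simp only [Nat.add_sub_cancel]
      have h1 : ‖z‖ ^ m ≤ ρ ^ m :=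
        pow_le_pow_left₀ (norm_nonneg z) hz m
      have h2 : cNab α (m+1) ≤ 1 := cNab_le_one hα hα1 _
      have h3 : ρ ^ m ≤ 2 * ρ ^ (m + 1) := by
        have : (1:ℝ) * ρ ^ m ≤ (2 * ρ) * ρ ^ m := by
          apply mul_le_mul_of_nonneg_right (by linarith) (by positivity)
        calc ρ ^ m = 1 * ρ ^ m := (one_mul _).symm
          _ ≤ (2 * ρ) * ρ ^ m := this
          _ = 2 * ρ ^ (m + 1) := by ring
      have hm1 : (0:ℝ) ≤ (m:ℝ) + 1 := by positivity
      push_cast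
      calc cNab α (m+1) * (((m:ℝ) + 1) * ‖z‖ ^ m)
          ≤ 1 * (((m:ℝ) + 1) * ρ ^ m) := by
            apply mul_le_mul h2 (by
              apply mul_le_mul_of_nonneg_left h1 hm1) (by positivity) (by norm_num)
        _ = ((m:ℝ) + 1) * ρ ^ m := one_mul _
        _ ≤ ((m:ℝ) + 1) * (2 * ρ ^ (m+1)) := by
            apply mul_le_mul_of_nonneg_left h3 hm1
        _ = 2 * (((m:ℝ) + 1) * ρ ^ (m+1)) := by ring

lemma hasDerivAt_cNab_tsum {α : ℝ} (hα : 0 < α) (hα1 : α < 1) {z : ℂ}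
    (hz : ‖z‖ < 1) :
    HasDerivAt (fun w => ∑' i : ℕ, (cNab α i : ℂ) * w ^ i)
      (∑' i : ℕ, (cNab α i : ℂ) * ((i : ℂ) * z ^ (i - 1))) z := by
  set ρ : ℝ := (‖z‖ + 1) / 2 with hρdef
  have habs : 0 ≤ ‖z‖ := norm_nonneg z
  have hρ1 : ρ < 1 := by rw [hρdef]; linarith
  have hρ2 : (1:ℝ)/2 ≤ ρ := by rw [hρdef]; linarith
  have hρ0 : 0 < ρ := by linarith
  have hzρ : ‖z‖ < ρ := by rw [hρdef]; linarith
  have hu : Summable fun n : ℕ => 2 * ((n : ℝ) * ρ ^ n) := by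
    have := (summable_pow_mul_geometric_of_norm_lt_one 1 (r := ρ)
      (by rw [Real.norm_eq_abs, abs_of_pos hρ0]; exact hρ1)).mul_left 2
    simpa using this
  apply hasDerivAt_tsum_of_isPreconnected hu (Metric.isOpen_ball (x := (0:ℂ)) (ε := ρ))
    ((convex_ball (0:ℂ) ρ).isPreconnected)
    (g' := fun n y => (cNab α n : ℂ) * ((n : ℂ) * y ^ (n - 1)))
    (y₀ := 0)
  · intro n y _
    exact (hasDerivAt_pow n y).const_mul _
  · intro n y hy
    rw [Metric.mem_ball, dist_zero_right] at hy
    -- reuse bound proof from summable_cNab_deriv: just redo inline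
    rw [norm_mul, norm_mul, norm_pow, Complex.norm_real,
      Real.norm_eq_abs, abs_of_pos (cNab_pos hα n), Complex.norm_natCast]
    match n with
    | 0 => simp
    | (m + 1) =>
        simp only [Nat.add_sub_cancel]
        have h1 : ‖y‖ ^ m ≤ ρ ^ m := pow_le_pow_left₀ (norm_nonneg y) hy.le m
        have h2 : cNab α (m+1) ≤ 1 := cNab_le_one hα hα1 _
        have h3 : ρ ^ m ≤ 2 * ρ ^ (m + 1) := by
          have : (1:ℝ) * ρ ^ m ≤ (2 * ρ) * ρ ^ m :=
            mul_le_mul_of_nonneg_right (by linarith) (by positivity)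
          calc ρ ^ m = 1 * ρ ^ m := (one_mul _).symm
            _ ≤ (2 * ρ) * ρ ^ m := this
            _ = 2 * ρ ^ (m + 1) := by ring
        have hm1 : (0:ℝ) ≤ (m:ℝ) + 1 := by positivity
        push_cast
        calc cNab α (m+1) * (((m:ℝ) + 1) * ‖y‖ ^ m)
            ≤ 1 * (((m:ℝ) + 1) * ρ ^ m) := by
              apply mul_le_mul h2 (mul_le_mul_of_nonneg_left h1 hm1) (by positivity) (by norm_num)
          _ = ((m:ℝ) + 1) * ρ ^ m := one_mul _
          _ ≤ ((m:ℝ) + 1) * (2 * ρ ^ (m+1)) := mul_le_mul_of_nonneg_left h3 hm1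
          _ = 2 * (((m:ℝ) + 1) * ρ ^ (m+1)) := by ring
  · exact Metric.mem_ball_self hρ0
  · apply summable_of_ne_finset_zero (s := {0})
    intro n hn
    have : n ≠ 0 := by simpa using hn
    simp [zero_pow this]
  · rw [Metric.mem_ball, dist_zero_right]; exact hzρ

lemma hasSum_cNab_cpow {α : ℝ} (hα : 0 < α) (hα1 : α < 1) {z : ℂ}
    (hz : ‖z‖ < 1) :
    HasSum (fun i : ℕ => (cNab α i : ℂ) * z ^ i) ((1 - z) ^ (-(α : ℂ))) := by
  set F : ℂ → ℂ := fun w => ∑' i : ℕ, (cNab α i : ℂ) * w ^ i with hF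
  -- the ODE : (1 - w) * D w = α * F w  on the ball
  have funeq : ∀ w : ℂ, ‖w‖ < 1 →
      (1 - w) * (∑' i : ℕ, (cNab α i : ℂ) * ((i : ℂ) * w ^ (i - 1))) = (α : ℂ) * F w := by
    intro w hw
    set ρ : ℝ := (‖w‖ + 1) / 2 with hρdef
    have habs : 0 ≤ ‖w‖ := norm_nonneg w
    have hρ1 : ρ < 1 := by rw [hρdef]; linarith
    have hρ2 : (1:ℝ)/2 ≤ ρ := by rw [hρdef]; linarith
    have hwρ : ‖w‖ ≤ ρ := by rw [hρdef]; linarith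
    have hsa : Summable fun i : ℕ => (cNab α i : ℂ) * ((i : ℂ) * w ^ (i - 1)) :=
      summable_cNab_deriv hα hα1 hρ1 hρ2 hwρ
    set D : ℂ := ∑' i : ℕ, (cNab α i : ℂ) * ((i : ℂ) * w ^ (i - 1)) with hD
    have hshift : D = ∑' i : ℕ, (cNab α (i+1) : ℂ) * (((i:ℂ) + 1) * w ^ i) := by
      rw [hD, Summable.tsum_eq_zero_add hsa]
      simp only [Nat.cast_zero, zero_mul, mul_zero, zero_add, Nat.add_sub_cancel]
      push_cast
      rfl
    have hrec : ∀ i : ℕ, (cNab α (i+1) : ℂ) * (((i:ℂ) + 1) * w ^ i)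
        = (α : ℂ) * ((cNab α i : ℂ) * w ^ i) + w * ((cNab α i : ℂ) * ((i : ℂ) * w ^ (i-1))) := by
      intro i
      have hre : cNab α (i+1) * ((i:ℝ) + 1) = (α + i) * cNab α i := by
        rw [cNab_succ hα]
        field_simp
      have hre' : (cNab α (i+1) : ℂ) * (((i:ℂ)) + 1) = ((α:ℂ) + i) * (cNab α i : ℂ) := by
        have := congrArg (Complex.ofReal) hre
        push_cast at this
        exact this
      match i with
      | 0 => simpa using hre'
      | (m+1) =>
          simp only [Nat.add_sub_cancel]
          calc (cNab α (m+1+1) : ℂ) * ((((m+1:ℕ):ℂ) + 1) * w ^ (m+1))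
              = (((α:ℂ) + (m+1:ℕ)) * (cNab α (m+1) : ℂ)) * w ^ (m+1) := by
                rw [← mul_assoc, hre']
            _ = _ := by push_cast; ring
    have hs1 : Summable fun i : ℕ => (α:ℂ) * ((cNab α i : ℂ) * w ^ i) :=
      (summable_cNab_mul_pow hα hα1 hw).mul_left _
    have hs2 : Summable fun i : ℕ => w * ((cNab α i : ℂ) * ((i : ℂ) * w ^ (i-1))) :=
      hsa.mul_left w
    have hDeq : D = (α : ℂ) * F w + w * D := by
      calc D = ∑' i : ℕ, ((α:ℂ) * ((cNab α i : ℂ) * w ^ i)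
              + w * ((cNab α i : ℂ) * ((i : ℂ) * w ^ (i-1)))) := by
            rw [hshift]; exact tsum_congr hrec
        _ = (∑' i : ℕ, (α:ℂ) * ((cNab α i : ℂ) * w ^ i))
              + ∑' i : ℕ, w * ((cNab α i : ℂ) * ((i : ℂ) * w ^ (i-1))) := Summable.tsum_add hs1 hs2
        _ = (α : ℂ) * F w + w * D := by rw [tsum_mul_left, tsum_mul_left]
    linear_combination hDeq
  -- the function F w * (1-w)^α is constant 1 on the unit ball
  have hcon : ∀ x : ℂ, ‖x‖ < 1 → F x * (1 - x) ^ (α : ℂ) = 1 := by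
    have key : ∀ x ∈ Metric.ball (0:ℂ) 1,
        HasFDerivWithinAt (fun w => F w * (1 - w) ^ (α:ℂ)) (0 : ℂ →L[ℝ] ℂ)
          (Metric.ball (0:ℂ) 1) x := by
      intro x hx
      rw [Metric.mem_ball, dist_zero_right] at hx
      have hnex : (1:ℂ) - x ≠ 0 := sub_ne_zero.mpr (by intro h; rw [← h] at hx; simp at hx)
      have hslit : (1 - x) ∈ Complex.slitPlane := by
        left
        simp only [Complex.sub_re, Complex.one_re]
        have := Complex.re_le_norm x
        linarith
      have hb : HasDerivAt (fun w : ℂ => 1 - w) (-1) x := (hasDerivAt_id x).const_sub 1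
      have hp : HasDerivAt (fun w : ℂ => (1 - w) ^ (α:ℂ))
          ((α:ℂ) * (1 - x) ^ ((α:ℂ) - 1) * (-1)) x := hb.cpow_const hslit
      have hdF : HasDerivAt F (∑' i : ℕ, (cNab α i : ℂ) * ((i : ℂ) * x ^ (i-1))) x :=
        hasDerivAt_cNab_tsum hα hα1 hx
      set Dx : ℂ := ∑' i : ℕ, (cNab α i : ℂ) * ((i : ℂ) * x ^ (i-1)) with hDx
      have hmul := hdF.mul hp
      have hval : Dx * (1 - x) ^ (α:ℂ) + F x * ((α:ℂ) * (1 - x) ^ ((α:ℂ) - 1) * (-1)) = 0 := by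
        have hsplit : (1 - x) ^ (α:ℂ) = (1 - x) ^ ((α:ℂ) - 1) * (1 - x) := by
          calc (1 - x) ^ (α:ℂ) = (1 - x) ^ (((α:ℂ) - 1) + 1) := by ring_nf
            _ = (1 - x) ^ ((α:ℂ) - 1) * (1 - x) ^ (1:ℂ) := Complex.cpow_add _ _ hnex
            _ = (1 - x) ^ ((α:ℂ) - 1) * (1 - x) := by rw [Complex.cpow_one]
        have hfe := funeq x hx
        calc Dx * (1 - x) ^ (α:ℂ) + F x * ((α:ℂ) * (1 - x) ^ ((α:ℂ) - 1) * (-1))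
            = (1 - x) ^ ((α:ℂ) - 1) * ((1 - x) * Dx - (α:ℂ) * F x) := by rw [hsplit]; ring
          _ = 0 := by rw [hfe]; ring
      rw [hval] at hmul
      have h0 : ((1 : ℂ →L[ℂ] ℂ).smulRight (0:ℂ)).restrictScalars ℝ = (0 : ℂ →L[ℝ] ℂ) := by
        ext; simp
      rw [← h0]
      exact (hmul.hasFDerivAt.restrictScalars ℝ).hasFDerivWithinAt
    intro x hx
    have h0mem : (0:ℂ) ∈ Metric.ball (0:ℂ) 1 := Metric.mem_ball_self one_pos
    have hxmem : x ∈ Metric.ball (0:ℂ) 1 := by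
      rw [Metric.mem_ball, dist_zero_right]; exact hx
    have hle := Convex.norm_image_sub_le_of_norm_hasFDerivWithin_le key
      (fun y _ => le_of_eq norm_zero) (convex_ball (0:ℂ) 1) h0mem hxmem
    have hF0 : F 0 = 1 := by
      rw [hF]
      simp only
      rw [tsum_eq_single 0 (by intro b hb; simp [zero_pow hb])]
      simp [cNab_zero hα]
    have hf0 : F 0 * (1 - 0 : ℂ) ^ (α:ℂ) = 1 := by
      rw [hF0]; simp [Complex.one_cpow]
    rw [hf0] at hle
    have hnorm : ‖F x * (1 - x) ^ (α:ℂ) - 1‖ ≤ 0 := by simpa using hle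
    exact sub_eq_zero.mp (norm_le_zero_iff.mp hnorm)
  have h1 := hcon z hz
  have hne : (1:ℂ) - z ≠ 0 := sub_ne_zero.mpr (by intro h; rw [← h] at hz; simp at hz)
  have hcne : (1 - z) ^ (α:ℂ) ≠ 0 := by
    simp [Complex.cpow_eq_zero_iff, hne]
  have hFz : (∑' i : ℕ, (cNab α i : ℂ) * z ^ i) = (1 - z) ^ (-(α:ℂ)) := by
    rw [Complex.cpow_neg]
    have hgoal : F z = ((1 - z) ^ (α:ℂ))⁻¹ := by
      field_simp
      linear_combination h1
    exact hgoal
  exact hFz ▸ (summable_cNab_mul_pow hα hα1 hz).hasSum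

/-- **The nabla Laplace transform of the `α`-th fractional sum is `s^{-α} F(s)`.**
For every complex `s` with `|1−s| < min(R, 1)` the nabla Laplace series of
`{}_a∇^{-α} f` converges and equals `s^{-α}` times the nabla Laplace transform of `f`,
where `s^{-α}` is the principal complex power. -/
theorem nabla_laplace_of_fractional_sum
    (a : ℤ) (α : ℝ) (hα0 : 0 < α) (hα1 : α < 1) (f : ℤ → ℝ) (R : ℝ) (hR : 0 < R)
    (hf : ∀ r : ℝ, 0 < r → r < R →
      Summable (fun k : ℕ => r ^ k * |f (a + (k : ℤ) + 1)|)) :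
    ∀ s : ℂ, ‖(1 - s)‖ < min R 1 →
      Summable (fun k : ℕ => (1 - s) ^ k * (nablaFracSum a α f (a + (k : ℤ) + 1) : ℂ)) ∧
      (∑' k : ℕ, (1 - s) ^ k * (nablaFracSum a α f (a + (k : ℤ) + 1) : ℂ)) =
        s ^ (-(α : ℂ)) * ∑' k : ℕ, (1 - s) ^ k * (f (a + (k : ℤ) + 1) : ℂ) := by
  intro s hs
  have hz1 : ‖(1 - s)‖ < 1 := lt_of_lt_of_le hs (min_le_right R 1)
  have hzR : ‖(1 - s)‖ < R := lt_of_lt_of_le hs (min_le_left R 1)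
  have hmin : 0 < min R 1 := lt_min hR one_pos
  set r : ℝ := max (‖(1 - s)‖) (min R 1 / 2) with hrdef
  have hr0 : 0 < r := lt_of_lt_of_le (by positivity) (le_max_right _ _)
  have hrR : r < R := by
    apply max_lt hzR
    have : min R 1 ≤ R := min_le_left _ _
    linarith
  have hA : Summable fun i : ℕ => ‖(cNab α i : ℂ) * (1 - s) ^ i‖ := by
    apply Summable.of_nonneg_of_le (fun _ => norm_nonneg _) ?_
      (summable_geometric_of_lt_one (norm_nonneg _) hz1)
    intro i
    rw [norm_mul, norm_pow, Complex.norm_real, Real.norm_eq_abs,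
      abs_of_pos (cNab_pos hα0 i)]
    calc cNab α i * ‖(1 - s)‖ ^ i ≤ 1 * ‖(1 - s)‖ ^ i :=
          mul_le_mul_of_nonneg_right (cNab_le_one hα0 hα1 i) (by positivity)
      _ = ‖(1 - s)‖ ^ i := one_mul _
  have hB : Summable fun k : ℕ => ‖(1 - s) ^ k * (f (a + (k : ℤ) + 1) : ℂ)‖ := by
    apply Summable.of_nonneg_of_le (fun _ => norm_nonneg _) ?_ (hf r hr0 hrR)
    intro k
    rw [norm_mul, norm_pow, Complex.norm_real, Real.norm_eq_abs]
    exact mul_le_mul_of_nonneg_right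
      (pow_le_pow_left₀ (norm_nonneg _) (le_max_left _ _) k) (abs_nonneg _)
  have conv_eq : ∀ n : ℕ, (∑ k ∈ Finset.range (n+1),
      ((cNab α k : ℂ) * (1 - s) ^ k) * ((1 - s) ^ (n - k) * (f (a + ((n - k : ℕ) : ℤ) + 1) : ℂ)))
      = (1 - s) ^ n * (nablaFracSum a α f (a + (n : ℤ) + 1) : ℂ) := by
    intro n
    have htn : ((a + (n : ℤ) + 1) - a).toNat = n + 1 := by omega
    have hcast : (nablaFracSum a α f (a + (n : ℤ) + 1) : ℂ)
        = ∑ i ∈ Finset.range (n+1), (cNab α i : ℂ) * (f (a + (n : ℤ) + 1 - i) : ℂ) := by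
      rw [nablaFracSum, htn]
      rw [Complex.ofReal_sum]
      exact Finset.sum_congr rfl fun i _ => by rw [Complex.ofReal_mul]; rfl
    rw [hcast, Finset.mul_sum]
    apply Finset.sum_congr rfl
    intro k hk
    rw [Finset.mem_range] at hk
    have h1 : a + ((n - k : ℕ) : ℤ) + 1 = a + (n : ℤ) + 1 - k := by omega
    have h2 : (1 - s) ^ k * (1 - s) ^ (n - k) = (1 - s) ^ n := by
      rw [← pow_add]; congr 1; omega
    rw [h1]
    calc ((cNab α k : ℂ) * (1 - s) ^ k) * ((1 - s) ^ (n - k) * (f (a + (n : ℤ) + 1 - k) : ℂ))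
        = ((1 - s) ^ k * (1 - s) ^ (n - k)) * ((cNab α k : ℂ) * (f (a + (n : ℤ) + 1 - k) : ℂ)) :=
          by ring
      _ = (1 - s) ^ n * ((cNab α k : ℂ) * (f (a + (n : ℤ) + 1 - k) : ℂ)) := by rw [h2]
  have hAB := hasSum_sum_range_mul_of_summable_norm hA hB
  simp only [conv_eq] at hAB
  refine ⟨hAB.summable, ?_⟩
  rw [hAB.tsum_eq]
  congr 1
  have hkey := hasSum_cNab_cpow hα0 hα1 hz1
  have hss : (1 : ℂ) - (1 - s) = s := by ring
  rw [hss] at hkey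
  exact hkey.tsum_eq
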